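/- For all q ≥ 2 and all x in (0, π/2), it holds that sin(x)/x < 2/π + ((π − 2)/π^{q+1})(π^q − (2x)^q), and among such q the bound with q = 2 is the smallest (best) upper bound. -/

import Mathlib

open Real

noncomputable def F1 (x : ℝ) : ℝ := 2 * Real.cos x + x * Real.sin x - 2
noncomputable def F2 (x : ℝ) : ℝ := 3 * Real.sin x - x * Real.cos x - 2 * x

lemma hasDerivF1 (x : ℝ) : HasDerivAt F1 (x * Real.cos x - Real.sin x) x := by
  have h := (((Real.hasDerivAt_cos x).const_mul 2).add
      ((hasDerivAt_id x).mul (Real.hasDerivAt_sin x))).sub_const 2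
  simp only [id_eq, one_mul] at h
  unfold F1
  refine h.congr_deriv ?_
  ring

lemma hasDerivF2 (x : ℝ) : HasDerivAt F2 (F1 x) x := by
  have h := ((( Real.hasDerivAt_sin x).const_mul 3).sub
      ((hasDerivAt_id x).mul (Real.hasDerivAt_cos x))).sub ((hasDerivAt_id x).const_mul 2)
  simp only [id_eq, one_mul] at h
  unfold F2
  refine h.congr_deriv ?_
  unfold F1; ring

lemma F1_neg : ∀ x ∈ Set.Ioc 0 (π/2), F1 x < 0 := by
  intro x hx
  have hanti : StrictAntiOn F1 (Set.Icc 0 (π/2)) := by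
    apply strictAntiOn_of_deriv_neg (convex_Icc _ _)
    · exact Continuous.continuousOn (by unfold F1; continuity)
    · intro y hy
      rw [interior_Icc] at hy
      rw [(hasDerivF1 y).deriv]
      have hcos : 0 < Real.cos y := Real.cos_pos_of_mem_Ioo ⟨by linarith [hy.1, pi_pos], hy.2⟩
      have ht : y < Real.tan y := Real.lt_tan hy.1 hy.2
      rw [Real.tan_eq_sin_div_cos] at ht
      have : y * Real.cos y < Real.sin y := by
        rw [lt_div_iff₀ hcos] at ht; linarith
      linarith
  have h0 : F1 0 = 0 := by simp [F1]
  have := hanti (Set.mem_Icc.2 ⟨le_refl 0, by linarith [pi_pos, hx.1, hx.2]⟩)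
    (Set.mem_Icc.2 ⟨hx.1.le, hx.2⟩) hx.1
  linarith

lemma F2_neg : ∀ x ∈ Set.Ioc 0 (π/2), F2 x < 0 := by
  intro x hx
  have hanti : StrictAntiOn F2 (Set.Icc 0 (π/2)) := by
    apply strictAntiOn_of_deriv_neg (convex_Icc _ _)
    · exact Continuous.continuousOn (by unfold F2; continuity)
    · intro y hy
      rw [interior_Icc] at hy
      rw [(hasDerivF2 y).deriv]
      exact F1_neg y ⟨hy.1, hy.2.le⟩
  have h0 : F2 0 = 0 := by simp [F2]
  have := hanti (Set.mem_Icc.2 ⟨le_refl 0, by linarith [pi_pos, hx.1, hx.2]⟩)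
    (Set.mem_Icc.2 ⟨hx.1.le, hx.2⟩) hx.1
  linarith

noncomputable def G (x : ℝ) : ℝ := (x - Real.sin x) / x ^ 3

lemma hasDerivG (x : ℝ) (hx : x ≠ 0) :
    HasDerivAt G ((x ^ 2 * F2 x) / (x ^ 3) ^ 2) x := by
  have h : HasDerivAt G
      (((1 - Real.cos x) * x ^ 3 - (x - Real.sin x) * (3 * x ^ 2)) / (x ^ 3) ^ 2) x := by
    apply HasDerivAt.div
    · exact (hasDerivAt_id' x).sub (Real.hasDerivAt_sin x)
    · simpa using hasDerivAt_pow 3 x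
    · exact pow_ne_zero 3 hx
  convert h using 2; unfold F2; ring

lemma G_gt (x : ℝ) (hx : x ∈ Set.Ioo 0 (π/2)) : G (π/2) < G x := by
  have hanti : StrictAntiOn G (Set.Icc x (π/2)) := by
    apply strictAntiOn_of_deriv_neg (convex_Icc _ _)
    · apply ContinuousOn.div
      · exact (Continuous.continuousOn (by continuity))
      · exact (Continuous.continuousOn (by continuity))
      · intro y hy
        exact pow_ne_zero 3 (by nlinarith [hx.1, hy.1] : (y:ℝ) ≠ 0 )
    · intro y hy
      rw [interior_Icc] at hy
      have hy0 : 0 < y := lt_trans hx.1 hy.1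
      rw [(hasDerivG y hy0.ne').deriv]
      apply div_neg_of_neg_of_pos
      · exact mul_neg_of_pos_of_neg (by positivity) (F2_neg y ⟨hy0, hy.2.le⟩)
      · positivity
  exact hanti (Set.mem_Icc.2 ⟨le_refl x, hx.2.le⟩)
    (Set.mem_Icc.2 ⟨hx.2.le, le_refl _⟩) hx.2

lemma key (x : ℝ) (hx : x ∈ Set.Ioo 0 (π/2)) :
    Real.sin x / x < 1 - 4 * (π - 2) / π ^ 3 * x ^ 2 := by
  have hG := G_gt x hx
  have hpi : (0:ℝ) < π := pi_pos
  have hG2 : G (π/2) = 4 * (π - 2) / π ^ 3 := by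
    unfold G
    rw [Real.sin_pi_div_two]
    field_simp
    ring
  have hx0 := hx.1
  rw [hG2] at hG
  unfold G at hG
  rw [lt_div_iff₀ (by positivity : (0:ℝ) < x ^ 3)] at hG
  rw [div_lt_iff₀ hx0]
  nlinarith [hG]

lemma expr_eq (r x : ℝ) (hx : 0 < x) :
    (π - 2)/π ^ (r+1) * (π ^ r - (2*x) ^ r)
      = (π - 2) * (1 - (2*x/π) ^ r) / π := by
  have hπ := pi_pos
  have h2x : 2*x = π * (2*x/π) := by field_simp
  have ht0 : (0:ℝ) ≤ 2*x/π := by positivity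
  rw [Real.rpow_add pi_pos, Real.rpow_one, h2x, Real.mul_rpow pi_pos.le ht0]
  have hπr : (0:ℝ) < π ^ r := Real.rpow_pos_of_pos pi_pos r
  field_simp

lemma bound_mono (q : ℝ) (hq : 2 ≤ q) (x : ℝ) (hx : x ∈ Set.Ioo 0 (π/2)) :
    2/π + (π - 2)/π ^ ((2:ℝ)+1) * (π ^ (2:ℝ) - (2*x) ^ (2:ℝ)) ≤
      2/π + (π - 2)/π ^ (q+1) * (π ^ q - (2*x) ^ q) := by
  have hπ := pi_pos
  have ht0 : (0:ℝ) < 2*x/π := by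
    apply div_pos (by linarith [hx.1]) hπ
  have ht1 : 2*x/π ≤ 1 := by
    rw [div_le_one hπ]; linarith [hx.2]
  rw [expr_eq q x hx.1, expr_eq 2 x hx.1]
  have h := Real.rpow_le_rpow_of_exponent_ge ht0 ht1 hq
  have hπ2 : (2:ℝ) ≤ π := by linarith [Real.pi_gt_three]
  have : (π-2)*(1-(2*x/π)^((2:ℝ))) ≤ (π-2)*(1-(2*x/π)^q) := by nlinarith [h]
  linarith [(div_le_div_iff_of_pos_right hπ).mpr this]

theorem upper_bound_A :
    (∀ q ≥ (2:ℝ), ∀ x ∈ Set.Ioo 0 (π/2),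
      Real.sin x / x < 2/π + (π - 2)/π ^ (q+1) * (π ^ q - (2*x) ^ q)) ∧
    (∀ q ≥ (2:ℝ), ∀ x ∈ Set.Ioo 0 (π/2),
      2/π + (π - 2)/π ^ ((2:ℝ)+1) * (π ^ (2:ℝ) - (2*x) ^ (2:ℝ)) ≤
        2/π + (π - 2)/π ^ (q+1) * (π ^ q - (2*x) ^ q)) := by
  have hπ := pi_pos
  have base : ∀ x ∈ Set.Ioo 0 (π/2),
      Real.sin x / x < 2/π + (π - 2)/π ^ ((2:ℝ)+1) * (π ^ (2:ℝ) - (2*x) ^ (2:ℝ)) := by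
    intro x hx
    have hk := key x hx
    have e1 : π ^ ((2:ℝ)+1) = π ^ (3:ℕ) := by
      rw [show ((2:ℝ)+1) = ((3:ℕ):ℝ) by norm_num, Real.rpow_natCast]
    have e2 : π ^ ((2:ℝ)) = π ^ (2:ℕ) := by
      rw [show ((2:ℝ)) = ((2:ℕ):ℝ) by norm_num, Real.rpow_natCast]
    have e3 : (2*x) ^ ((2:ℝ)) = (2*x) ^ (2:ℕ) := by
      rw [show ((2:ℝ)) = ((2:ℕ):ℝ) by norm_num, Real.rpow_natCast]
    rw [e1, e2, e3]
    have : 2/π + (π - 2)/π ^ (3:ℕ) * (π ^ (2:ℕ) - (2*x) ^ (2:ℕ))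
        = 1 - 4 * (π - 2) / π ^ 3 * x ^ 2 := by
      field_simp
      ring
    rw [this]
    exact hk
  constructor
  · intro q hq x hx
    exact lt_of_lt_of_le (base x hx) (bound_mono q hq x hx)
  · intro q hq x hx
    exact bound_mono q hq x hx
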